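/- Let V and V' be complex vector spaces of the same finite dimension n. Let x, y ∈ End(V) be commuting operators and i ∈ V a cyclic vector for (x, y) (the only subspace of V containing i and invariant under both x and y is V itself); similarly let x', y' ∈ End(V') be commuting operators with cyclic vector i' ∈ V'. If for every polynomial f ∈ ℂ[X, Y] one has f(x, y)(i) = 0 ⟺ f(x', y')(i') = 0, then there exists a ℂ-linear isomorphism g : V → V' with x' = g∘x∘g^{-1}, y' = g∘y∘g^{-1} and i' = g(i). (The assignment (x,y,i) ↦ J_{x,y,i} := {f ∈ ℂ[X,Y] | f(x,y)(i) = 0} separates base-change orbits.) -/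

import Mathlib

open Polynomial

private lemma auxCommute {V : Type*} [AddCommGroup V] [Module ℂ V]
    (x y : Module.End ℂ V) (hxy : x * y = y * x) (p : ℂ[X]) :
    Commute ((aeval x) p) y := by
  induction p using Polynomial.induction_on with
  | C a => simpa [Commute, SemiconjBy, aeval_C] using (Algebra.commutes a y)
  | add p q hp hq => simpa [map_add] using hp.add_left hq
  | monomial n a ih =>
      have hx : Commute x y := hxy
      simpa [map_mul, pow_succ, ← mul_assoc] using ih.mul_left hx

private noncomputable def auxPhi {V : Type*} [AddCommGroup V] [Module ℂ V]
    (x y : Module.End ℂ V) (hxy : x * y = y * x) :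
    Polynomial (Polynomial ℂ) →ₐ[ℂ] Module.End ℂ V :=
  eval₂AlgHom (aeval x) y (auxCommute x y hxy)

private noncomputable def auxE {V : Type*} [AddCommGroup V] [Module ℂ V]
    (x y : Module.End ℂ V) (hxy : x * y = y * x) (i : V) :
    Polynomial (Polynomial ℂ) →ₗ[ℂ] V :=
  (LinearMap.applyₗ i).comp (auxPhi x y hxy).toLinearMap

private lemma auxE_apply {V : Type*} [AddCommGroup V] [Module ℂ V]
    (x y : Module.End ℂ V) (hxy : x * y = y * x) (i : V) (f : Polynomial (Polynomial ℂ)) :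
    auxE x y hxy i f = Polynomial.eval₂ (Polynomial.aeval x).toRingHom y f i := rfl

private lemma auxE_one {V : Type*} [AddCommGroup V] [Module ℂ V]
    (x y : Module.End ℂ V) (hxy : x * y = y * x) (i : V) :
    auxE x y hxy i 1 = i := by
  simp [auxE, auxPhi]

private lemma auxE_CX_mul {V : Type*} [AddCommGroup V] [Module ℂ V]
    (x y : Module.End ℂ V) (hxy : x * y = y * x) (i : V) (f : Polynomial (Polynomial ℂ)) :
    auxE x y hxy i (C X * f) = x (auxE x y hxy i f) := by
  simp only [auxE, LinearMap.comp_apply, AlgHom.toLinearMap_apply, map_mul]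
  have h1 : auxPhi x y hxy (C X) = x := by simp [auxPhi]
  rw [h1]
  rfl

private lemma auxE_X_mul {V : Type*} [AddCommGroup V] [Module ℂ V]
    (x y : Module.End ℂ V) (hxy : x * y = y * x) (i : V) (f : Polynomial (Polynomial ℂ)) :
    auxE x y hxy i (X * f) = y (auxE x y hxy i f) := by
  simp only [auxE, LinearMap.comp_apply, AlgHom.toLinearMap_apply, map_mul]
  have h1 : auxPhi x y hxy X = y := by simp [auxPhi]
  rw [h1]
  rfl

private lemma auxE_surj {V : Type*} [AddCommGroup V] [Module ℂ V]
    (x y : Module.End ℂ V) (hxy : x * y = y * x) (i : V)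
    (hcyc : ∀ S : Submodule ℂ V, S.map x ≤ S → S.map y ≤ S → i ∈ S → S = ⊤) :
    Function.Surjective (auxE x y hxy i) := by
  rw [← LinearMap.range_eq_top]
  apply hcyc
  · rintro v ⟨w, ⟨f, rfl⟩, rfl⟩
    exact ⟨C X * f, auxE_CX_mul x y hxy i f⟩
  · rintro v ⟨w, ⟨f, rfl⟩, rfl⟩
    exact ⟨X * f, auxE_X_mul x y hxy i f⟩
  · exact ⟨1, auxE_one x y hxy i⟩

/-- The assignment `(x, y, i) ↦ J_{x,y,i} = {f ∈ ℂ[X,Y] | f(x,y)(i) = 0}` separates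
base-change orbits: two triples consisting of a pair of commuting operators together with a
cyclic vector, on complex vector spaces of the same finite dimension `n`, are conjugate by
a linear isomorphism iff they have the same annihilator ideal.  Two-variable polynomials
are encoded as `ℂ[X][Y]`, and `f(x, y)` is the evaluation `eval₂ (aeval x) y f`, well
defined since `x` and `y` commute. -/
theorem cyclic_triples_conjugate_of_same_annihilator
    (V V' : Type*) [AddCommGroup V] [Module ℂ V] [FiniteDimensional ℂ V]
    [AddCommGroup V'] [Module ℂ V'] [FiniteDimensional ℂ V']
    (n : ℕ) (hdim : Module.finrank ℂ V = n) (hdim' : Module.finrank ℂ V' = n)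
    (x y : Module.End ℂ V) (hxy : x * y = y * x)
    (x' y' : Module.End ℂ V') (hxy' : x' * y' = y' * x')
    (i : V) (i' : V')
    (hcyc : ∀ S : Submodule ℂ V, S.map x ≤ S → S.map y ≤ S → i ∈ S → S = ⊤)
    (hcyc' : ∀ S : Submodule ℂ V', S.map x' ≤ S → S.map y' ≤ S → i' ∈ S → S = ⊤)
    (hann : ∀ f : Polynomial (Polynomial ℂ),
      Polynomial.eval₂ (Polynomial.aeval x).toRingHom y f i = 0 ↔
        Polynomial.eval₂ (Polynomial.aeval x').toRingHom y' f i' = 0) :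
    ∃ g : V ≃ₗ[ℂ] V',
      (∀ u, g (x u) = x' (g u)) ∧ (∀ u, g (y u) = y' (g u)) ∧ g i = i' := by
  set E := auxE x y hxy i with hE
  set E' := auxE x' y' hxy' i' with hE'
  have hEsurj : Function.Surjective E := auxE_surj x y hxy i hcyc
  have hE'surj : Function.Surjective E' := auxE_surj x' y' hxy' i' hcyc'
  have hker : LinearMap.ker E = LinearMap.ker E' := by
    ext f
    simp only [LinearMap.mem_ker, hE, hE', auxE_apply]
    exact hann f
  let g : V ≃ₗ[ℂ] V' :=
    (E.quotKerEquivOfSurjective hEsurj).symm ≪≫ₗ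
      Submodule.quotEquivOfEq _ _ hker ≪≫ₗ E'.quotKerEquivOfSurjective hE'surj
  have hkey : ∀ f, g (E f) = E' f := by
    intro f
    have h1 : (E.quotKerEquivOfSurjective hEsurj).symm (E f) = Submodule.Quotient.mk f := by
      rw [LinearEquiv.symm_apply_eq]
      rfl
    simp only [g, LinearEquiv.trans_apply, h1]
    rfl
  refine ⟨g, ?_, ?_, ?_⟩
  · intro u
    obtain ⟨f, rfl⟩ := hEsurj u
    rw [← auxE_CX_mul x y hxy i f, ← hE, hkey, hkey, hE', auxE_CX_mul]
  · intro u
    obtain ⟨f, rfl⟩ := hEsurj u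
    rw [← auxE_X_mul x y hxy i f, ← hE, hkey, hkey, hE', auxE_X_mul]
  · rw [← auxE_one x y hxy i, ← hE, hkey, hE', auxE_one]
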